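/- For V_13 with 1/2 < a ≤ 1: if x⁽⁰⁾ ∈ S² with x₁⁽⁰⁾ = 0 and x⁽⁰⁾ ≠ e₂, e₃, then the trajectory V_13ⁿ(x⁽⁰⁾) converges to e₂ = (0,1,0). -/

import Mathlib

def V13 (a : ℝ) (p : ℝ × ℝ × ℝ) : ℝ × ℝ × ℝ :=
  (p.1^2 + 2*a*p.1*(1-p.1), p.2.1^2 + 2*p.2.1*p.2.2, p.2.2^2 + 2*(1-a)*p.1*(1-p.1))

def S2 : Set (ℝ × ℝ × ℝ) :=
  {p | 0 ≤ p.1 ∧ 0 ≤ p.2.1 ∧ 0 ≤ p.2.2 ∧ p.1 + p.2.1 + p.2.2 = 1}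

theorem V13_face_converges_e2 (a : ℝ) (ha : a ∈ Set.Ioc (1/2 : ℝ) 1)
    (x : ℝ × ℝ × ℝ) (hx : x ∈ S2) (h1 : x.1 = 0)
    (h2 : x ≠ ((0:ℝ),(1:ℝ),(0:ℝ))) (h3 : x ≠ ((0:ℝ),(0:ℝ),(1:ℝ))) :
    Filter.Tendsto (fun n => (V13 a)^[n] x) Filter.atTop
      (nhds ((0:ℝ), (1:ℝ), (0:ℝ))) := by
  obtain ⟨h0, hy0, hz0, hsum⟩ := hx
  set z := x.2.2 with hz
  have hxeq : x = (0, 1 - z, z) := by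
    have : x.2.1 = 1 - z := by rw [h1] at hsum; linarith
    obtain ⟨x1, x2, x3⟩ := x
    simp_all
  have hz1 : z < 1 := by
    rcases lt_or_eq_of_le (by linarith : z ≤ 1) with h | h
    · exact h
    · exfalso; apply h3; rw [hxeq, ← h]; norm_num
  have key : ∀ n, (V13 a)^[n] x = (0, 1 - z^(2^n), z^(2^n)) := by
    intro n
    induction n with
    | zero => simpa using hxeq
    | succ n ih =>
      rw [Function.iterate_succ_apply', ih]
      have h2 : z ^ 2 ^ (n+1) = (z ^ 2 ^ n)^2 := by rw [← pow_mul, ← pow_succ]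
      simp only [V13, Prod.mk.injEq]
      refine ⟨by ring, by rw [h2]; ring, by rw [h2]; ring⟩
  have hlim : Filter.Tendsto (fun n => z^(2^n)) Filter.atTop (nhds 0) := by
    have h2n : Filter.Tendsto (fun n : ℕ => 2^n) Filter.atTop Filter.atTop :=
      tendsto_pow_atTop_atTop_of_one_lt one_lt_two
    have hp : Filter.Tendsto (fun k : ℕ => z^k) Filter.atTop (nhds 0) := by
      apply tendsto_pow_atTop_nhds_zero_of_abs_lt_one
      rw [abs_lt]; constructor <;> linarith
    exact hp.comp h2n
  have : Filter.Tendsto (fun n => ((0:ℝ), 1 - z^(2^n), z^(2^n))) Filter.atTop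
      (nhds ((0:ℝ), (1:ℝ), (0:ℝ))) := by
    refine Filter.Tendsto.prodMk_nhds tendsto_const_nhds (Filter.Tendsto.prodMk_nhds ?_ hlim)
    simpa using (tendsto_const_nhds (x := (1:ℝ)) (f := Filter.atTop (α := ℕ))).sub hlim
  simpa only [key] using this
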